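/- Let G and H be finite simple graphs, where G has at least one edge. Then the following are equivalent: (i) there exists a real number c such that t(H, W) ≥ t(G, W)^c for every finite simple graph W with at least one vertex satisfying t(G, W) > 0; (ii) there exists at least one graph homomorphism from H to G. -/

import Mathlib

/-- The homomorphism density `t(G, W)`. -/
noncomputable def homDensity {α β : Type} [Fintype α] [Fintype β]
    (G : SimpleGraph α) (W : SimpleGraph β) : ℝ :=
  (Nat.card (G →g W) : ℝ) / (Fintype.card β : ℝ) ^ (Fintype.card α)

open Finset

section Aux

/-- Generic Cauchy–Schwarz counting: `|X|² ≤ |{(x,y) : r x = r y}| ⬝ |Z|`. -/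
lemma cs_count {X Z : Type} [Finite X] [Finite Z] (r : X → Z) :
    Nat.card X ^ 2 ≤ Nat.card {p : X × X // r p.1 = r p.2} * Nat.card Z := by
  classical
  cases nonempty_fintype X
  cases nonempty_fintype Z
  rw [Nat.card_eq_fintype_card, Nat.card_eq_fintype_card, Nat.card_eq_fintype_card]
  have h1 : Fintype.card X = ∑ z : Z, (univ.filter fun x : X => r x = z).card := by
    rw [← Finset.card_univ]
    exact Finset.card_eq_sum_card_fiberwise (fun x _ => mem_univ _)
  have h2 : Fintype.card {p : X × X // r p.1 = r p.2}
      = ∑ z : Z, (univ.filter fun x : X => r x = z).card ^ 2 := by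
    rw [Fintype.card_subtype]
    rw [Finset.card_eq_sum_card_fiberwise (f := fun p : X × X => r p.1)
      (t := univ) (fun _ _ => mem_univ _)]
    refine Finset.sum_congr rfl fun z _ => ?_
    have hset : ((univ.filter fun p : X × X => r p.1 = r p.2).filter
        fun p : X × X => r p.1 = z)
        = (univ.filter fun x : X => r x = z) ×ˢ (univ.filter fun x : X => r x = z) := by
      ext p
      simp only [mem_filter, mem_univ, true_and, Finset.mem_product]
      constructor
      · rintro ⟨h, h'⟩; exact ⟨h', h ▸ h'⟩
      · rintro ⟨h, h'⟩; exact ⟨h.trans h'.symm, h⟩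
    rw [hset, Finset.card_product, sq]
  rw [h1, h2]
  have := sq_sum_le_card_mul_sum_sq (s := (univ : Finset Z))
    (f := fun z => ((univ.filter fun x : X => r x = z).card : ℝ))
  have hcast : ((∑ z : Z, (univ.filter fun x : X => r x = z).card : ℕ) : ℝ) ^ 2
      ≤ ((∑ z : Z, (univ.filter fun x : X => r x = z).card ^ 2) * Fintype.card Z : ℕ) := by
    push_cast
    rw [mul_comm]
    simpa using this
  exact_mod_cast hcast

lemma natCard_subtype_ne {δ : Type} [Fintype δ] (v : δ) :
    Nat.card {x : δ // x ≠ v} = Fintype.card δ - 1 := by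
  classical
  rw [Nat.card_eq_fintype_card]
  rw [Fintype.card_subtype_compl (fun x => x = v), Fintype.card_subtype_eq]

lemma natCard_compl_range {δ α : Type} [Fintype δ] [Fintype α] {f : δ → α}
    (hf : Function.Injective f) :
    Nat.card {a : α // a ∉ Set.range f} = Fintype.card α - Fintype.card δ := by
  classical
  rw [Nat.card_eq_fintype_card]
  rw [Fintype.card_subtype_compl (fun a => a ∈ Set.range f)]
  congr 1
  rw [← Nat.card_eq_fintype_card, ← Nat.card_eq_fintype_card (α := δ)]
  exact Nat.card_congr (Equiv.ofInjective f hf).symm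

variable {α β : Type} [Fintype α] [Fintype β] (G : SimpleGraph α) (W : SimpleGraph β)

lemma card_hom_le : Nat.card (G →g W) ≤ Fintype.card β ^ Fintype.card α := by
  have h : Nat.card (G →g W) ≤ Nat.card (α → β) :=
    Nat.card_le_card_of_injective _ DFunLike.coe_injective
  rwa [Nat.card_fun, Nat.card_eq_fintype_card (α := β), Nat.card_eq_fintype_card (α := α)] at h

lemma homDensity_nonneg : 0 ≤ homDensity G W := by
  unfold homDensity; positivity

lemma homDensity_le_one [Nonempty β] : homDensity G W ≤ 1 := by
  rw [homDensity, div_le_one (by positivity)]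
  exact_mod_cast card_hom_le G W

lemma homDensity_le_of_le {γ : Type} [Fintype γ] {H₁ H₂ : SimpleGraph γ} (h : H₁ ≤ H₂) :
    homDensity H₂ W ≤ homDensity H₁ W := by
  unfold homDensity
  gcongr
  exact_mod_cast Nat.card_le_card_of_injective
      (fun ψ : H₂ →g W => ψ.comp (SimpleGraph.Hom.ofLE h))
      (fun ψ ψ' hh => by
        ext x
        exact DFunLike.congr_fun hh x)

lemma homDensity_le_comap {γ : Type} [Fintype γ] [Nonempty β] (f : γ → α)
    (hf : Function.Injective f) :
    homDensity G W ≤ homDensity (G.comap f) W := by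
  classical
  -- counting
  have hcount : Nat.card (G →g W)
      ≤ Nat.card ((G.comap f) →g W) * Fintype.card β ^ (Fintype.card α - Fintype.card γ) := by
    have hinj : Function.Injective
        (fun ψ : G →g W =>
          ((⟨fun x => ψ (f x), fun h => ψ.map_adj h⟩ : (G.comap f) →g W),
            (fun a : {a : α // a ∉ Set.range f} => ψ a.1))) := by
      intro ψ ψ' h
      have h1 := congrArg Prod.fst h
      have h2 := congrArg Prod.snd h
      ext a
      by_cases ha : a ∈ Set.range f
      · obtain ⟨x, rfl⟩ := ha
        exact DFunLike.congr_fun h1 x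
      · exact congrFun h2 ⟨a, ha⟩
    have := Nat.card_le_card_of_injective _ hinj
    rwa [Nat.card_prod, Nat.card_fun, natCard_compl_range hf,
      Nat.card_eq_fintype_card (α := β)] at this
  have hle : Fintype.card γ ≤ Fintype.card α := Fintype.card_le_of_injective f hf
  have hn : (0:ℝ) < (Fintype.card β : ℝ) := by
    exact_mod_cast Fintype.card_pos
  rw [homDensity, homDensity, div_le_div_iff₀ (by positivity) (by positivity)]
  calc (Nat.card (G →g W) : ℝ) * (Fintype.card β : ℝ) ^ Fintype.card γ
      ≤ ((Nat.card ((G.comap f) →g W) : ℝ)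
          * (Fintype.card β : ℝ) ^ (Fintype.card α - Fintype.card γ))
        * (Fintype.card β : ℝ) ^ Fintype.card γ := by
        have : (Nat.card (G →g W) : ℝ) ≤ (Nat.card ((G.comap f) →g W) : ℝ)
            * (Fintype.card β : ℝ) ^ (Fintype.card α - Fintype.card γ) := by
          exact_mod_cast hcount
        gcongr
    _ = (Nat.card ((G.comap f) →g W) : ℝ) * (Fintype.card β : ℝ) ^ Fintype.card α := by
        rw [mul_assoc, ← pow_add]
        congr 2
        omega

end Aux

section CS

variable {α β : Type} [Fintype α] [Fintype β] (G : SimpleGraph α) (W : SimpleGraph β)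

lemma card_hom_comap_sq_le {γ : Type} [Fintype γ] (f : γ → α) {v v' : γ}
    (hne : v ≠ v') (hfv : f v = f v') [Fintype {x : γ // x ≠ v'}] :
    Nat.card ((G.comap (f ∘ (Subtype.val : {x : γ // x ≠ v'} → γ))) →g W) ^ 2
      ≤ Nat.card ((G.comap f) →g W) * Fintype.card β ^ (Fintype.card γ - 2) := by
  classical
  set γ' := {x : γ // x ≠ v'} with hγ'def
  let w : γ' := ⟨v, hne⟩
  set X := (G.comap (f ∘ (Subtype.val : γ' → γ))) →g W with hXdef
  let r : X → ({x : γ' // x ≠ w} → β) := fun ψ z => ψ z.1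
  -- the combination map
  have hcomb : ∀ p : {p : X × X // r p.1 = r p.2},
      ∀ a b : γ, G.Adj (f a) (f b) →
        W.Adj (if ha : a = v' then p.1.2 w else p.1.1 ⟨a, ha⟩)
          (if hb : b = v' then p.1.2 w else p.1.1 ⟨b, hb⟩) := by
    rintro ⟨⟨ψ₁, ψ₂⟩, hp⟩ a b hab
    have hag : ∀ (x : γ') (hx : x ≠ w), ψ₁ x = ψ₂ x := fun x hx => congrFun hp ⟨x, hx⟩
    have hker : ∀ (b : γ) (hb : b = v' → False), b ≠ v → W.Adj (ψ₂ w) (ψ₁ ⟨b, hb⟩)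
        → True := fun _ _ _ _ => trivial
    by_cases ha : a = v' <;> by_cases hb : b = v'
    · exact absurd (ha ▸ hb ▸ hab) (G.irrefl)
    · rw [dif_pos ha, dif_neg hb]
      subst ha
      by_cases hbv : b = v
      · subst hbv
        rw [← hfv] at hab
        exact absurd hab (G.irrefl)
      · have hbw : (⟨b, hb⟩ : γ') ≠ w := fun hh => hbv (congrArg Subtype.val hh)
        rw [hag _ hbw]
        refine ψ₂.map_adj ?_
        show G.Adj (f v) (f b)
        rw [hfv]; exact hab
    · rw [dif_neg ha, dif_pos hb]
      subst hb
      by_cases hav : a = v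
      · subst hav
        rw [← hfv] at hab
        exact absurd hab (G.irrefl)
      · have haw : (⟨a, ha⟩ : γ') ≠ w := fun hh => hav (congrArg Subtype.val hh)
        rw [hag _ haw]
        refine (ψ₂.map_adj ?_).symm
        show G.Adj (f v) (f a)
        rw [hfv]; exact hab.symm
    · rw [dif_neg ha, dif_neg hb]
      exact ψ₁.map_adj hab
  let Φ : {p : X × X // r p.1 = r p.2} → ((G.comap f) →g W) := fun p =>
    ⟨fun x => if hx : x = v' then p.1.2 w else p.1.1 ⟨x, hx⟩,
      fun {a b} hab => hcomb p a b hab⟩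
  have hΦ : Function.Injective Φ := by
    rintro ⟨⟨ψ₁, ψ₂⟩, hp⟩ ⟨⟨χ₁, χ₂⟩, hq⟩ h
    have hfun : ∀ x : γ,
        (if hx : x = v' then ψ₂ w else ψ₁ ⟨x, hx⟩)
          = (if hx : x = v' then χ₂ w else χ₁ ⟨x, hx⟩) := fun x =>
      DFunLike.congr_fun h x
    have h1 : ψ₁ = χ₁ := by
      ext x
      have := hfun x.1
      rwa [dif_neg x.2, dif_neg x.2] at this
    have h2 : ψ₂ = χ₂ := by
      ext x
      by_cases hx : x = w
      · subst hx
        have := hfun v'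
        rwa [dif_pos rfl, dif_pos rfl] at this
      · have e1 : ψ₁ x = ψ₂ x := congrFun hp ⟨x, hx⟩
        have e2 : χ₁ x = χ₂ x := congrFun hq ⟨x, hx⟩
        rw [← e1, ← e2, h1]
    simp only [Subtype.mk.injEq, Prod.mk.injEq]
    exact ⟨h1, h2⟩
  have hP : Nat.card {p : X × X // r p.1 = r p.2} ≤ Nat.card ((G.comap f) →g W) :=
    Nat.card_le_card_of_injective Φ hΦ
  have hZ : Nat.card ({x : γ' // x ≠ w} → β) = Fintype.card β ^ (Fintype.card γ - 2) := by
    rw [Nat.card_fun, Nat.card_eq_fintype_card (α := β), natCard_subtype_ne w]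
    congr 1
    have : Fintype.card γ' = Fintype.card γ - 1 := by
      rw [← Nat.card_eq_fintype_card]
      exact natCard_subtype_ne v'
    rw [this]
    omega
  calc Nat.card X ^ 2 ≤ Nat.card {p : X × X // r p.1 = r p.2}
        * Nat.card ({x : γ' // x ≠ w} → β) := cs_count r
    _ ≤ Nat.card ((G.comap f) →g W) * Fintype.card β ^ (Fintype.card γ - 2) := by
        rw [hZ]; exact Nat.mul_le_mul_right _ hP

lemma homDensity_comap_sq {γ : Type} [Fintype γ] [Nonempty β] (f : γ → α) {v v' : γ}
    (hne : v ≠ v') (hfv : f v = f v') [Fintype {x : γ // x ≠ v'}] :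
    homDensity (G.comap (f ∘ (Subtype.val : {x : γ // x ≠ v'} → γ))) W ^ 2
      ≤ homDensity (G.comap f) W := by
  have hcount := card_hom_comap_sq_le G W f hne hfv
  have h2 : 2 ≤ Fintype.card γ :=
    Fintype.one_lt_card_iff_nontrivial.mpr ⟨⟨v, v', hne⟩⟩
  have hγ' : Fintype.card {x : γ // x ≠ v'} = Fintype.card γ - 1 := by
    rw [← Nat.card_eq_fintype_card]
    exact natCard_subtype_ne v'
  have hn : (0:ℝ) < (Fintype.card β : ℝ) := by exact_mod_cast Fintype.card_pos
  rw [homDensity, homDensity, hγ', div_pow, div_le_div_iff₀ (by positivity) (by positivity)]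
  calc (Nat.card ((G.comap (f ∘ (Subtype.val : {x : γ // x ≠ v'} → γ))) →g W) : ℝ) ^ 2
        * (Fintype.card β : ℝ) ^ Fintype.card γ
      ≤ ((Nat.card ((G.comap f) →g W) : ℝ)
          * (Fintype.card β : ℝ) ^ (Fintype.card γ - 2))
        * (Fintype.card β : ℝ) ^ Fintype.card γ := by
        have : ((Nat.card ((G.comap (f ∘ (Subtype.val : {x : γ // x ≠ v'} → γ))) →g W)) : ℝ) ^ 2
            ≤ (Nat.card ((G.comap f) →g W) : ℝ)
              * (Fintype.card β : ℝ) ^ (Fintype.card γ - 2) := by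
          exact_mod_cast hcount
        gcongr
    _ = (Nat.card ((G.comap f) →g W) : ℝ)
        * ((Fintype.card β : ℝ) ^ (Fintype.card γ - 1)) ^ 2 := by
        rw [mul_assoc, ← pow_add, ← pow_mul]
        congr 2
        omega

end CS

section Key

variable {α β : Type} [Fintype α] [Fintype β] (G : SimpleGraph α) (W : SimpleGraph β)

lemma key_induction [Nonempty β] (hpos : 0 < homDensity G W) :
    ∀ (k : ℕ) (γ : Type) (instγ : Fintype γ) (f : γ → α), @Fintype.card γ instγ = k →
      homDensity G W ^ (2 ^ k) ≤ @homDensity γ β instγ _ (G.comap f) W := by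
  intro k
  induction k using Nat.strong_induction_on with
  | _ k ih =>
    intro γ instγ f hcard
    by_cases hinj : Function.Injective f
    · calc homDensity G W ^ (2 ^ k) ≤ homDensity G W ^ 1 :=
          pow_le_pow_of_le_one hpos.le (homDensity_le_one G W) Nat.one_le_two_pow
        _ = homDensity G W := pow_one _
        _ ≤ homDensity (G.comap f) W := homDensity_le_comap G W f hinj
    · rw [Function.Injective] at hinj
      push_neg at hinj
      obtain ⟨v, v', hfv, hne⟩ := hinj
      letI : DecidableEq γ := Classical.decEq γ
      have hkpos : 0 < k := by
        rw [← hcard]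
        exact Fintype.card_pos_iff.mpr ⟨v⟩
      have hγ' : Fintype.card {x : γ // x ≠ v'} = k - 1 := by
        rw [← Nat.card_eq_fintype_card, natCard_subtype_ne v', hcard]
      have IH := ih (k - 1) (by omega) {x : γ // x ≠ v'} _
        (f ∘ (Subtype.val : {x : γ // x ≠ v'} → γ)) hγ'
      have CS := homDensity_comap_sq G W f hne hfv
      have hsq : (homDensity G W ^ (2 ^ (k - 1))) ^ 2
          ≤ homDensity (G.comap (f ∘ (Subtype.val : {x : γ // x ≠ v'} → γ))) W ^ 2 := by
        apply pow_le_pow_left₀ (by positivity) IH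
      have hexp : (homDensity G W ^ (2 ^ (k - 1))) ^ 2 = homDensity G W ^ (2 ^ k) := by
        rw [← pow_mul]
        congr 1
        rw [← pow_succ]
        congr 1
        omega
      calc homDensity G W ^ (2 ^ k) = (homDensity G W ^ (2 ^ (k - 1))) ^ 2 := hexp.symm
        _ ≤ homDensity (G.comap (f ∘ (Subtype.val : {x : γ // x ≠ v'} → γ))) W ^ 2 := hsq
        _ ≤ homDensity (G.comap f) W := CS

end Key

theorem stmt_1 {α γ : Type} [Fintype α] [Fintype γ]
    (G : SimpleGraph α) (H : SimpleGraph γ) (hG : ∃ u v, G.Adj u v) :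
    (∃ c : ℝ, ∀ (β : Type) [Fintype β] [Nonempty β] (W : SimpleGraph β),
        0 < homDensity G W → homDensity H W ≥ homDensity G W ^ c) ↔
      Nonempty (H →g G) := by
  constructor
  · rintro ⟨c, hc⟩
    obtain ⟨u, v, huv⟩ := hG
    haveI : Nonempty α := ⟨u⟩
    have hpos : 0 < homDensity G G := by
      have h1 : 0 < Nat.card (G →g G) := Nat.card_pos_iff.mpr ⟨⟨SimpleGraph.Hom.id⟩, inferInstance⟩
      have h2 : (0:ℝ) < (Fintype.card α : ℝ) ^ Fintype.card α := by
        have : (0:ℝ) < (Fintype.card α : ℝ) := by exact_mod_cast Fintype.card_pos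
        positivity
      exact div_pos (by exact_mod_cast h1) h2
    have hHG : 0 < homDensity H G :=
      lt_of_lt_of_le (Real.rpow_pos_of_pos hpos c) (hc α G hpos)
    have hcard : 0 < Nat.card (H →g G) := by
      by_contra h
      push_neg at h
      rw [Nat.le_zero] at h
      rw [homDensity, h] at hHG
      simp at hHG
    exact (Nat.card_pos_iff.mp hcard).1
  · rintro ⟨φ⟩
    refine ⟨((2 : ℕ) ^ Fintype.card γ : ℕ), ?_⟩
    intro β instβ instNe W hpos
    have hle : H ≤ G.comap φ := fun _ _ hadj => φ.map_adj hadj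
    have h1 : homDensity (G.comap φ) W ≤ homDensity H W := homDensity_le_of_le W hle
    have h2 : homDensity G W ^ (2 ^ Fintype.card γ) ≤ homDensity (G.comap φ) W :=
      key_induction G W hpos (Fintype.card γ) γ _ φ rfl
    have h3 : homDensity G W ^ (((2 : ℕ) ^ Fintype.card γ : ℕ) : ℝ)
        = homDensity G W ^ ((2 : ℕ) ^ Fintype.card γ : ℕ) :=
      Real.rpow_natCast _ _
    rw [ge_iff_le, h3]
    exact le_trans h2 h1
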